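/- arXiv:1803.02842 — 4 statements merged into one kernel-verified Lean document; each statement's English description precedes it below -/
import Mathlib

section
/- For every positive integer k, the set of ordered k-tuples (ν_1, …, ν_k) of oddly supported measures on ℝ^n, all with the same odd number N of support points and such that the combined collection of all Nk support points of ν_1, …, ν_k is in general position, is dense in the k-fold product of the space of Borel probability measures on ℝ^n. -/
open MeasureTheory

noncomputable section

/-- A family of points of `ℝ^n` is in general position if no `n + 1` of them lie on a
common affine hyperplane (the zero set of an affine function with nonzero linear part). -/
def InGeneralPosition {n : ℕ} {ι : Type*} (p : ι → (Fin n → ℝ)) : Prop :=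
  ∀ A : (Fin n → ℝ) →ᵃ[ℝ] ℝ, A.linear ≠ 0 → {k | A (p k) = 0}.encard ≤ n

open Metric Set ENNReal Topology

section LP
variable {Ω : Type*} [MeasurableSpace Ω] [PseudoMetricSpace Ω] [OpensMeasurableSpace Ω]

lemma lp_of_tv (μ ν : Measure Ω) (η : ℝ≥0∞)
    (h : ∀ B : Set Ω, MeasurableSet B → μ B ≤ ν B + η ∧ ν B ≤ μ B + η) :
    levyProkhorovEDist μ ν ≤ η := by
  apply levyProkhorovEDist_le_of_forall
  intro ε B hη hεtop hB
  have hε0 : 0 < ε.toReal := ENNReal.toReal_pos (pos_of_gt hη).ne' hεtop.ne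
  have hsub : B ⊆ thickening ε.toReal B := self_subset_thickening hε0 B
  constructor
  · exact (h B hB).1.trans (add_le_add (measure_mono hsub) hη.le)
  · exact (h B hB).2.trans (add_le_add (measure_mono hsub) hη.le)

lemma lp_of_map (μ : Measure Ω) {h : Ω → Ω} (hmeas : Measurable h) {G : Set Ω} {δ : ℝ}
    (hδ : 0 ≤ δ) (hG : ∀ x ∈ G, dist (h x) x ≤ δ) (hbad : μ Gᶜ ≤ ENNReal.ofReal δ) :
    levyProkhorovEDist μ (Measure.map h μ) ≤ ENNReal.ofReal δ := by
  apply levyProkhorovEDist_le_of_forall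
  intro ε B hη hεtop hB
  have hδε : δ < ε.toReal := by
    rwa [ENNReal.ofReal_lt_iff_lt_toReal hδ hεtop.ne] at hη
  have hmap : ∀ C : Set Ω, MeasurableSet C → Measure.map h μ C = μ (h ⁻¹' C) :=
    fun C hC => Measure.map_apply hmeas hC
  constructor
  · rw [hmap _ isOpen_thickening.measurableSet]
    calc μ B ≤ μ (B ∩ G) + μ (B \ G) := measure_le_inter_add_diff μ B G
    _ ≤ μ (h ⁻¹' thickening ε.toReal B) + ε := by
        refine add_le_add (measure_mono ?_) ((measure_mono (diff_subset_compl B G)).trans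
          (hbad.trans hη.le))
        rintro x ⟨hxB, hxG⟩
        exact mem_thickening_iff.2 ⟨x, hxB, lt_of_le_of_lt (hG x hxG) hδε⟩
  · rw [hmap _ hB]
    calc μ (h ⁻¹' B) ≤ μ (h ⁻¹' B ∩ G) + μ (h ⁻¹' B \ G) :=
      measure_le_inter_add_diff μ _ G
    _ ≤ μ (thickening ε.toReal B) + ε := by
        refine add_le_add (measure_mono ?_) ((measure_mono (diff_subset_compl _ G)).trans
          (hbad.trans hη.le))
        rintro x ⟨hxB, hxG⟩
        exact mem_thickening_iff.2 ⟨h x, hxB, by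
          rw [dist_comm]; exact lt_of_le_of_lt (hG x hxG) hδε⟩

lemma lp_of_perturb {ι : Type*} [Fintype ι] (c : ℝ≥0∞) (a b : ι → Ω) {δ : ℝ} (hδ : 0 ≤ δ)
    (hd : ∀ l, dist (a l) (b l) ≤ δ) :
    levyProkhorovEDist (c • ∑ l, Measure.dirac (a l)) (c • ∑ l, Measure.dirac (b l))
      ≤ ENNReal.ofReal δ := by
  apply levyProkhorovEDist_le_of_forall
  intro ε B hη hεtop hB
  have hδε : δ < ε.toReal := by
    rwa [ENNReal.ofReal_lt_iff_lt_toReal hδ hεtop.ne] at hη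
  have key : ∀ (u v : ι → Ω), (∀ l, dist (u l) (v l) ≤ δ) →
      (c • ∑ l, Measure.dirac (u l)) B ≤
        (c • ∑ l, Measure.dirac (v l)) (thickening ε.toReal B) + ε := by
    intro u v huv
    rw [Measure.smul_apply, Measure.smul_apply, Measure.finset_sum_apply,
      Measure.finset_sum_apply, smul_eq_mul, smul_eq_mul]
    refine le_add_right (mul_le_mul_right (Finset.sum_le_sum fun l _ => ?_) c)
    rw [Measure.dirac_apply' _ hB, Measure.dirac_apply' _ isOpen_thickening.measurableSet]
    by_cases hu : u l ∈ B
    · have : v l ∈ thickening ε.toReal B :=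
        mem_thickening_iff.2 ⟨u l, hu, by rw [dist_comm]; exact lt_of_le_of_lt (huv l) hδε⟩
      simp [hu, this]
    · simp [hu]
  exact ⟨key a b hd, key b a fun l => by rw [dist_comm]; exact hd l⟩

end LP

section GP

variable {n : ℕ}

/-- Strong general position: every at most `n+1` of the points are affinely independent. -/
def GPfam {ι : Type*} (a : ι → (Fin n → ℝ)) : Prop :=
  ∀ (κ : Type) [Fintype κ] (g : κ ↪ ι), Fintype.card κ ≤ n + 1 →
    AffineIndependent ℝ (a ∘ g)

lemma GPfam.comp {ι ι' : Type*} {a : ι → (Fin n → ℝ)} (h : GPfam a) (f : ι' ↪ ι) :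
    GPfam (a ∘ f) := by
  intro κ _ g hκ
  exact h κ (g.trans f) hκ

lemma GPfam.inGeneralPosition {ι : Type*} {a : ι → (Fin n → ℝ)} (h : GPfam a) :
    InGeneralPosition a := by
  classical
  intro A hA
  by_contra hcon
  have h1 : ((n : ℕ∞) + 1) ≤ {q | A (a q) = 0}.encard := Order.add_one_le_of_lt (not_le.1 hcon)
  obtain ⟨t, hts, htcard⟩ := Set.exists_subset_encard_eq (by exact_mod_cast h1 :
    (((n+1 : ℕ)) : ℕ∞) ≤ {q | A (a q) = 0}.encard)
  have htfin : t.Finite := Set.finite_of_encard_eq_coe htcard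
  set s : Finset ι := htfin.toFinset with hs_def
  have hs : s.card = n + 1 := by
    have := Set.encard_coe_eq_coe_finsetCard s
    rw [htfin.coe_toFinset, htcard] at this
    exact_mod_cast this.symm
  set g : Fin (n + 1) ↪ ι :=
    ⟨fun i => (s.equivFin.symm (Fin.cast hs.symm i) : ι), by
      intro i j hij
      have h1 : Fin.cast hs.symm i = Fin.cast hs.symm j :=
        s.equivFin.symm.injective (Subtype.val_injective hij)
      have h2 := congrArg Fin.val h1
      simp only [Fin.coe_cast] at h2
      exact Fin.ext h2⟩ with hg_def
  have hmem : ∀ i, (g i : ι) ∈ t := by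
    intro i
    have : (s.equivFin.symm (Fin.cast hs.symm i) : ι) ∈ s := (s.equivFin.symm _).2
    exact (by simpa [hs_def, htfin.mem_toFinset] using this : ((s.equivFin.symm (Fin.cast hs.symm i) : ι)) ∈ t)
  have hAI : AffineIndependent ℝ (a ∘ g) := h _ g (by simp)
  have hrank : Module.finrank ℝ (vectorSpan ℝ (Set.range (a ∘ g))) = n :=
    hAI.finrank_vectorSpan (by simp)
  have hker : vectorSpan ℝ (Set.range (a ∘ g)) ≤ LinearMap.ker A.linear := by
    rw [vectorSpan_def]
    rw [Submodule.span_le]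
    rintro - ⟨x, ⟨i, rfl⟩, y, ⟨j, rfl⟩, rfl⟩
    have hx : A (a (g i)) = 0 := hts (hmem i)
    have hy : A (a (g j)) = 0 := hts (hmem j)
    simp only [SetLike.mem_coe, LinearMap.mem_ker, Function.comp_apply]
    have h5 := A.linearMap_vsub (a (g i)) (a (g j))
    rw [h5, vsub_eq_sub, hx, hy, sub_zero]
  have hkerlt : LinearMap.ker A.linear < ⊤ := by
    rcases lt_or_eq_of_le (le_top : LinearMap.ker A.linear ≤ ⊤) with h | h
    · exact h
    · exfalso
      apply hA
      apply LinearMap.ext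
      intro x
      have : x ∈ LinearMap.ker A.linear := h.symm ▸ Submodule.mem_top
      simpa using this
  have h2 : Module.finrank ℝ (LinearMap.ker A.linear) < n := by
    have := Submodule.finrank_lt (K := ℝ) (V := Fin n → ℝ) hkerlt.ne
    rwa [Module.finrank_fin_fun] at this
  have h3 : n ≤ Module.finrank ℝ (LinearMap.ker A.linear) :=
    le_trans (le_of_eq hrank.symm) (Submodule.finrank_mono hker)
  omega

lemma snoc_ne_last {M : ℕ} {α : Sort*} (a₀ : Fin M → α) (x : α) (j : Fin (M+1))
    (hj : j ≠ Fin.last M) : (Fin.snoc a₀ x : Fin (M+1) → α) j = a₀ (j.castPred hj) := by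
  induction j using Fin.lastCases with
  | last => exact absurd rfl hj
  | cast i => rw [Fin.snoc_castSucc, Fin.castPred_castSucc]

lemma exists_gp_perturb : ∀ (M : ℕ) (b : Fin M → (Fin n → ℝ)) (δ : ℝ), 0 < δ →
    ∃ a : Fin M → (Fin n → ℝ), (∀ q, dist (a q) (b q) < δ) ∧ GPfam a := by
  intro M
  induction M with
  | zero =>
    intro b δ hδ
    refine ⟨b, fun q => q.elim0, ?_⟩
    intro κ _ g _
    have : IsEmpty κ := Function.isEmpty g
    exact affineIndependent_of_subsingleton ℝ _
  | succ M IH =>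
    intro b δ hδ
    obtain ⟨a₀, ha₀d, ha₀⟩ := IH (b ∘ Fin.castSucc) δ hδ
    classical
    set 𝒯 : Finset (Finset (Fin M)) := Finset.univ.filter (fun T => T.card ≤ n) with h𝒯
    set bad : Set (Fin n → ℝ) := ⋃ T ∈ 𝒯, (affineSpan ℝ (a₀ '' ↑T) : Set (Fin n → ℝ))
      with hbad_def
    have hspan_ne_top : ∀ T ∈ 𝒯, affineSpan ℝ (a₀ '' (T : Set (Fin M))) ≠ ⊤ := by
      intro T hT htop
      rcases T.eq_empty_or_nonempty with rfl | hTne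
      · simp only [Finset.coe_empty, Set.image_empty] at htop
        rw [AffineSubspace.span_empty] at htop
        exact AffineSubspace.bot_ne_top ℝ (Fin n → ℝ) (Fin n → ℝ) htop
      · obtain ⟨m, hm⟩ : ∃ m, T.card = m + 1 :=
          ⟨T.card - 1, (Nat.succ_pred_eq_of_pos (Finset.card_pos.2 hTne)).symm⟩
        have hmn : m + 1 ≤ n := by
          have := (Finset.mem_filter.1 hT).2
          omega
        have hle : Module.finrank ℝ (vectorSpan ℝ (a₀ '' (T : Set (Fin M)))) ≤ m := by
          have := finrank_vectorSpan_image_finset_le ℝ a₀ T hm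
          rwa [Finset.coe_image] at this
        have : vectorSpan ℝ (a₀ '' (T : Set (Fin M))) = ⊤ := by
          rw [← direction_affineSpan, htop, AffineSubspace.direction_top]
        rw [this, finrank_top, Module.finrank_fin_fun] at hle
        omega
    have hbadnull : volume bad = 0 := by
      rw [hbad_def]
      refine (measure_biUnion_null_iff 𝒯.countable_toSet).2 fun T hT => ?_
      exact Measure.addHaar_affineSubspace volume _ (hspan_ne_top T hT)
    have hball : volume (ball (b (Fin.last M)) δ \ bad) ≠ 0 := by
      rw [measure_diff_null hbadnull]
      exact (measure_ball_pos _ _ hδ).ne'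
    obtain ⟨x, hx⟩ := nonempty_of_measure_ne_zero hball
    refine ⟨Fin.snoc a₀ x, ?_, ?_⟩
    · intro q
      induction q using Fin.lastCases with
      | last => simpa [Fin.snoc_last] using hx.1
      | cast i => simpa [Fin.snoc_castSucc] using ha₀d i
    · intro κ _ g hκ
      by_cases hlast : ∃ i₀ : κ, g i₀ = Fin.last M
      · obtain ⟨i₀, hi₀⟩ := hlast
        have hne : ∀ y : κ, y ≠ i₀ → g y ≠ Fin.last M := by
          intro y hy h
          exact hy (g.injective (h.trans hi₀.symm))
        set g' : {y : κ // y ≠ i₀} ↪ Fin M :=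
          ⟨fun y => (g y.1).castPred (hne y.1 y.2), by
            intro y z hyz
            apply Subtype.ext
            apply g.injective
            have := congrArg Fin.castSucc hyz
            rwa [Fin.castSucc_castPred, Fin.castSucc_castPred] at this⟩ with hg'_def
        apply AffineIndependent.affineIndependent_of_notMem_span (i := i₀)
        · have h1 := ha₀ {y : κ // y ≠ i₀} g'
            (le_trans (Fintype.card_subtype_le _) (le_trans (le_refl _) hκ))
          have h2 : (fun (y : {y : κ // y ≠ i₀}) => (Fin.snoc a₀ x ∘ g) y.1) = a₀ ∘ g' := by
            funext y
            exact snoc_ne_last a₀ x (g y.1) (hne y.1 y.2)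
          rw [h2]
          exact h1
        · set T : Finset (Fin M) := Finset.univ.image g' with hT_def
          have hTcard : T.card ≤ n := by
            have h1 : T.card ≤ Fintype.card {y : κ // y ≠ i₀} :=
              le_trans Finset.card_image_le (by simp)
            have h2 : Fintype.card {y : κ // y ≠ i₀} = Fintype.card κ - 1 :=
              Set.card_ne_eq i₀
            omega
          have himg : (Fin.snoc a₀ x ∘ g) '' {y | y ≠ i₀} = a₀ '' (T : Set (Fin M)) := by
            ext z
            constructor
            · rintro ⟨y, hy, rfl⟩
              refine ⟨g' ⟨y, hy⟩, by simp [hT_def], ?_⟩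
              exact (snoc_ne_last a₀ x (g y) (hne y hy)).symm
            · rintro ⟨j, hj, rfl⟩
              rw [hT_def] at hj
              simp only [Finset.coe_image, Finset.coe_univ, Set.image_univ, Set.mem_range] at hj
              obtain ⟨y, rfl⟩ := hj
              refine ⟨y.1, y.2, ?_⟩
              exact snoc_ne_last a₀ x (g y.1) (hne y.1 y.2)
          rw [himg]
          have hxbad : x ∉ bad := hx.2
          intro hmem
          apply hxbad
          rw [hbad_def]
          refine Set.mem_biUnion (show T ∈ 𝒯 by simp [h𝒯, hTcard]) ?_
          have : (Fin.snoc a₀ x ∘ g) i₀ = x := by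
            show (Fin.snoc a₀ x : Fin (M+1) → _) (g i₀) = x
            rw [hi₀, Fin.snoc_last]
          rwa [this] at hmem
      · have hg : ∀ i, g i ≠ Fin.last M := fun i h => hlast ⟨i, h⟩
        set g'' : κ ↪ Fin M := ⟨fun y => (g y).castPred (hg y), by
          intro y z hyz
          apply g.injective
          have := congrArg Fin.castSucc hyz
          rwa [Fin.castSucc_castPred, Fin.castSucc_castPred] at this⟩ with hg''_def
        have h2 : (Fin.snoc a₀ x : Fin (M+1) → _) ∘ g = a₀ ∘ g'' := by
          funext y
          exact snoc_ne_last a₀ x (g y) (hg y)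
        rw [h2]
        exact ha₀ κ g'' hκ

end GP

section Round

variable {E : Type*} [MeasurableSpace E] [MetricSpace E] [BorelSpace E] [Nonempty E]

/-- Rounding a finitely-supported (pushforward) probability measure to a uniform
empirical measure with `N` atoms, with total-variation error `F.card / N`. -/
lemma exists_rounding (P : Measure E) [IsProbabilityMeasure P] {h : E → E}
    (hmeas : Measurable h) (F : Finset E) (hF : ∀ x, h x ∈ F) (N : ℕ) (hN : 0 < N) :
    ∃ q : Fin N → E, (∀ l, q l ∈ F) ∧ ∀ B : Set E, MeasurableSet B →
      (Measure.map h P) B ≤ ((N : ℝ≥0∞)⁻¹ • ∑ l, Measure.dirac (q l)) B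
          + ENNReal.ofReal (F.card / N) ∧
      ((N : ℝ≥0∞)⁻¹ • ∑ l, Measure.dirac (q l)) B ≤ (Measure.map h P) B
          + ENNReal.ofReal (F.card / N) := by
  classical
  set J := F.card with hJ_def
  have hJ1 : 1 ≤ J := Finset.card_pos.2 ⟨h (Classical.arbitrary E), hF _⟩
  set v : Fin J → E := fun j => (F.equivFin.symm j : E) with hv_def
  have hv_inj : Function.Injective v :=
    Subtype.val_injective.comp F.equivFin.symm.injective
  have hv_surj : ∀ x, v (F.equivFin ⟨h x, hF x⟩) = h x := by
    intro x
    simp [hv_def]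
  set w : ℕ → ℝ := fun j => if hj : j < J then (P (h ⁻¹' {v ⟨j, hj⟩})).toReal else 0
    with hw_def
  have hw0 : ∀ j, 0 ≤ w j := by
    intro j
    simp only [hw_def]
    split <;> simp [ENNReal.toReal_nonneg]
  set A : ℕ → ℝ := fun j => ∑ j' ∈ Finset.range j, w j' with hA_def
  have hA0 : ∀ j, 0 ≤ A j := fun j => Finset.sum_nonneg fun _ _ => hw0 _
  have hA_succ : ∀ j, A (j + 1) = A j + w j := fun j => Finset.sum_range_succ w j
  have hA_mono : Monotone A := by
    intro j₁ j₂ hj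
    exact Finset.sum_le_sum_of_subset_of_nonneg
      (Finset.range_subset_range.2 hj) (fun j _ _ => hw0 j)
  -- partition of unity
  have hdisj : Pairwise (Function.onFun Disjoint fun j : Fin J => h ⁻¹' {v j}) := by
    intro j j' hjj'
    apply Set.disjoint_left.2
    intro x hx hx'
    exact hjj' (hv_inj (by rw [← Set.mem_singleton_iff.1 hx, ← Set.mem_singleton_iff.1 hx']))
  have hmble : ∀ j : Fin J, MeasurableSet (h ⁻¹' {v j}) :=
    fun j => hmeas (measurableSet_singleton _)
  have hsum1 : ∑ j : Fin J, P (h ⁻¹' {v j}) = 1 := by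
    have hunion : ⋃ j : Fin J, h ⁻¹' {v j} = Set.univ := by
      ext x
      simp only [Set.mem_iUnion, Set.mem_univ, iff_true, Set.mem_preimage,
        Set.mem_singleton_iff]
      exact ⟨F.equivFin ⟨h x, hF x⟩, (hv_surj x).symm⟩
    rw [← tsum_fintype (L := SummationFilter.unconditional _), ← measure_iUnion hdisj hmble, hunion, measure_univ]
  have hAJ : A J = 1 := by
    simp only [hA_def]
    have : ∑ j' ∈ Finset.range J, w j' = ∑ j : Fin J, w j.val := by
      rw [Finset.sum_range fun j => w j]
    rw [this]
    have : ∀ j : Fin J, w j.val = (P (h ⁻¹' {v j})).toReal := by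
      intro j
      rw [hw_def]
      simp only [j.isLt, dif_pos, Fin.eta]
    rw [Finset.sum_congr rfl fun j _ => this j, ← ENNReal.toReal_sum
      (fun j _ => measure_ne_top P _), hsum1, ENNReal.toReal_one]
  set s : ℕ → ℕ := fun j => ⌈(N : ℝ) * A j⌉₊ with hs_def
  have hs_mono : Monotone s := fun j₁ j₂ hj =>
    Nat.ceil_le_ceil (mul_le_mul_of_nonneg_left (hA_mono hj) (Nat.cast_nonneg N))
  have hs0 : s 0 = 0 := by simp [hs_def, hA_def]
  have hsJ : s J = N := by simp [hs_def, hAJ]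
  -- the assignment of atoms to grid indices
  have hex : ∀ l : Fin N, ∃ j, (l : ℕ) < s (j + 1) := by
    intro l
    refine ⟨J - 1, ?_⟩
    rw [Nat.sub_add_cancel hJ1, hsJ]
    exact l.isLt
  set q0 : Fin N → Fin J := fun l =>
    ⟨Nat.find (hex l), by
      have h1 : Nat.find (hex l) ≤ J - 1 := Nat.find_le (by
        rw [Nat.sub_add_cancel hJ1, hsJ]
        exact l.isLt)
      omega⟩ with hq0_def
  have hq_lt : ∀ l : Fin N, (l : ℕ) < s ((q0 l : ℕ) + 1) := fun l => Nat.find_spec (hex l)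
  have hq_le : ∀ l, s (q0 l) ≤ (l : ℕ) := by
    intro l
    have h3 : (q0 l : ℕ) = Nat.find (hex l) := rfl
    rcases Nat.eq_zero_or_pos (q0 l : ℕ) with h0 | h0
    · rw [h0, hs0]; exact Nat.zero_le _
    · have h2 := Nat.find_min (hex l) (m := (q0 l : ℕ) - 1) (by omega)
      rw [Nat.sub_add_cancel h0] at h2
      omega
  have hiff : ∀ (l : Fin N) (j : Fin J), q0 l = j ↔ (s j ≤ l ∧ (l : ℕ) < s (j + 1)) := by
    intro l j
    constructor
    · rintro rfl; exact ⟨hq_le l, hq_lt l⟩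
    · rintro ⟨hle, hlt⟩
      by_contra hne
      rcases lt_or_gt_of_ne (fun hval => hne (Fin.ext hval) :
          (q0 l : ℕ) ≠ (j : ℕ)) with hlt' | hlt'
      · exact absurd (lt_of_lt_of_le (hq_lt l) (hs_mono hlt')) (not_lt.2 hle)
      · exact absurd (lt_of_lt_of_le hlt (hs_mono hlt')) (not_lt.2 (hq_le l))
  have hcount : ∀ j : Fin J,
      (Finset.univ.filter (fun l : Fin N => q0 l = j)).card = s (j + 1) - s j := by
    intro j
    have hsj1N : s ((j : ℕ) + 1) ≤ N := by
      have : ((j : ℕ) + 1) ≤ J := j.isLt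
      calc s ((j : ℕ) + 1) ≤ s J := hs_mono this
      _ = N := hsJ
    rw [show (Finset.univ.filter (fun l : Fin N => q0 l = j)).card
        = (Finset.Ico (s j) (s ((j : ℕ) + 1))).card from ?_, Nat.card_Ico]
    apply Finset.card_nbij (i := (Fin.val : Fin N → ℕ))
    · intro l hl
      rw [Finset.mem_coe, Finset.mem_filter] at hl
      rw [Finset.mem_coe, Finset.mem_Ico]
      exact (hiff l j).1 hl.2
    · intro l _ l' _ hll'
      exact Fin.ext hll'
    · intro m hm
      rw [Finset.coe_Ico, Set.mem_Ico] at hm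
      refine ⟨⟨m, lt_of_lt_of_le hm.2 hsj1N⟩, ?_, rfl⟩
      rw [Finset.mem_coe, Finset.mem_filter]
      exact ⟨Finset.mem_univ _, (hiff _ j).2 ⟨hm.1, hm.2⟩⟩
  have hclose : ∀ j : Fin J,
      |((s ((j : ℕ) + 1) - s (j : ℕ) : ℕ) : ℝ) - (N : ℝ) * w j| ≤ 1 := by
    intro j
    have hle' : s (j : ℕ) ≤ s ((j : ℕ) + 1) := hs_mono (Nat.le_succ _)
    rw [Nat.cast_sub hle']
    have h1 : (N : ℝ) * A (j : ℕ) ≤ (s (j : ℕ) : ℝ) := Nat.le_ceil _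
    have h2 : (s (j : ℕ) : ℝ) < (N : ℝ) * A (j : ℕ) + 1 :=
      Nat.ceil_lt_add_one (mul_nonneg (Nat.cast_nonneg N) (hA0 _))
    have h3 : (N : ℝ) * A ((j : ℕ) + 1) ≤ (s ((j : ℕ) + 1) : ℝ) := Nat.le_ceil _
    have h4 : (s ((j : ℕ) + 1) : ℝ) < (N : ℝ) * A ((j : ℕ) + 1) + 1 :=
      Nat.ceil_lt_add_one (mul_nonneg (Nat.cast_nonneg N) (hA0 _))
    have h5 : A ((j : ℕ) + 1) = A (j : ℕ) + w j := hA_succ _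
    rw [abs_le]
    constructor <;> nlinarith
  -- Conclusion
  refine ⟨fun l => v (q0 l), fun l => (F.equivFin.symm _).2, ?_⟩
  intro B hB
  set hits : Finset (Fin J) := Finset.univ.filter (fun j => v j ∈ B) with hhits_def
  -- value of the pushforward measure
  have hQB : Measure.map h P B = ENNReal.ofReal (∑ j ∈ hits, w j.val) := by
    rw [Measure.map_apply hmeas hB]
    have hpre : h ⁻¹' B = ⋃ j ∈ hits, h ⁻¹' {v j} := by
      ext x
      simp only [Set.mem_preimage, Set.mem_iUnion, Set.mem_singleton_iff]
      constructor
      · intro hx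
        refine ⟨F.equivFin ⟨h x, hF x⟩, ?_, (hv_surj x).symm⟩
        rw [hhits_def, Finset.mem_filter]
        exact ⟨Finset.mem_univ _, by rw [hv_surj x]; exact hx⟩
      · rintro ⟨j, hj, hx⟩
        rw [hhits_def, Finset.mem_filter] at hj
        rw [hx]; exact hj.2
    rw [hpre, measure_biUnion_finset (hdisj.set_pairwise _) (fun j _ => hmble j)]
    rw [ENNReal.ofReal_sum_of_nonneg (fun j _ => hw0 _)]
    congr 1
    funext j
    have : w j.val = (P (h ⁻¹' {v j})).toReal := by
      rw [hw_def]; simp only [j.isLt, dif_pos, Fin.eta]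
    rw [this, ENNReal.ofReal_toReal (measure_ne_top P _)]
  -- value of the empirical measure
  have hEB : ((N : ℝ≥0∞)⁻¹ • ∑ l, Measure.dirac (v (q0 l))) B
      = ENNReal.ofReal (∑ j ∈ hits, ((s ((j : ℕ) + 1) - s (j : ℕ) : ℕ) : ℝ) / N) := by
    rw [Measure.smul_apply, Measure.finset_sum_apply, smul_eq_mul]
    have hdsum : ∑ l : Fin N, Measure.dirac (v (q0 l)) B
        = ((Finset.univ.filter (fun l : Fin N => v (q0 l) ∈ B)).card : ℝ≥0∞) := by
      rw [Finset.card_filter]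
      push_cast
      congr 1
      funext l
      rw [Measure.dirac_apply' _ hB]
      by_cases hl : v (q0 l) ∈ B <;> simp [hl]
    rw [hdsum]
    have hcard : (Finset.univ.filter (fun l : Fin N => v (q0 l) ∈ B)).card
        = ∑ j ∈ hits, (s ((j : ℕ) + 1) - s (j : ℕ)) := by
      rw [Finset.card_eq_sum_card_fiberwise (f := q0) (t := hits) ?_]
      · apply Finset.sum_congr rfl
        intro j hj
        rw [← hcount j]
        congr 1
        rw [Finset.filter_filter]
        apply Finset.filter_congr
        intro l _
        constructor
        · rintro ⟨-, h2⟩; exact h2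
        · intro h2
          refine ⟨?_, h2⟩
          rw [h2]
          rw [hhits_def, Finset.mem_filter] at hj
          exact hj.2
      · intro l hl
        rw [Finset.mem_coe, Finset.mem_filter] at hl
        rw [Finset.mem_coe, hhits_def, Finset.mem_filter]
        exact ⟨Finset.mem_univ _, hl.2⟩
    rw [hcard]
    rw [ENNReal.ofReal_sum_of_nonneg (fun j _ => by positivity), Nat.cast_sum,
      Finset.mul_sum]
    refine Finset.sum_congr rfl fun j _ => ?_
    rw [ENNReal.ofReal_div_of_pos (by exact_mod_cast hN), ENNReal.ofReal_natCast,
      ENNReal.ofReal_natCast, ENNReal.div_eq_inv_mul]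
  -- the real-number estimate
  have hreal : |(∑ j ∈ hits, w j.val) -
      ∑ j ∈ hits, ((s ((j : ℕ) + 1) - s (j : ℕ) : ℕ) : ℝ) / N| ≤ J / N := by
    rw [← Finset.sum_sub_distrib]
    calc |∑ j ∈ hits, (w j.val - ((s ((j : ℕ) + 1) - s (j : ℕ) : ℕ) : ℝ) / N)|
        ≤ ∑ j ∈ hits, |w j.val - ((s ((j : ℕ) + 1) - s (j : ℕ) : ℕ) : ℝ) / N| :=
          Finset.abs_sum_le_sum_abs _ _
      _ ≤ ∑ _j ∈ hits, 1 / (N : ℝ) := by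
          apply Finset.sum_le_sum
          intro j _
          have hN' : (0 : ℝ) < N := by exact_mod_cast hN
          have e : w j.val - ((s ((j : ℕ) + 1) - s (j : ℕ) : ℕ) : ℝ) / N
              = ((N : ℝ) * w j.val - ((s ((j : ℕ) + 1) - s (j : ℕ) : ℕ) : ℝ)) / N := by
            field_simp
          rw [e, abs_div, abs_of_pos hN', div_le_div_iff_of_pos_right hN', abs_sub_comm]
          exact hclose j
      _ ≤ J / N := by
          rw [Finset.sum_const, nsmul_eq_mul]
          have hN' : (0 : ℝ) < N := by exact_mod_cast hN
          rw [mul_one_div, div_le_div_iff_of_pos_right hN']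
          have hc : hits.card ≤ J := by
            calc hits.card ≤ (Finset.univ : Finset (Fin J)).card :=
              Finset.card_filter_le _ _
            _ = J := by simp
          exact_mod_cast hc
  rw [hQB, hEB]
  have habs := abs_le.1 hreal
  constructor
  · refine le_trans (ENNReal.ofReal_le_ofReal (by linarith [habs.2] :
      (∑ j ∈ hits, w j.val) ≤ (∑ j ∈ hits, ((s ((j : ℕ) + 1) - s (j : ℕ) : ℕ) : ℝ) / N)
        + J / N)) ?_
    exact ENNReal.ofReal_add_le
  · refine le_trans (ENNReal.ofReal_le_ofReal (by linarith [habs.1] :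
      (∑ j ∈ hits, ((s ((j : ℕ) + 1) - s (j : ℕ) : ℕ) : ℝ) / N)
        ≤ (∑ j ∈ hits, w j.val) + J / N)) ?_
    exact ENNReal.ofReal_add_le

end Round


lemma exists_grid (n : ℕ) (m : ℕ) (hm : 0 < m) (R : ℝ) :
    ∃ h : (Fin n → ℝ) → (Fin n → ℝ), Measurable h ∧ (Set.range h).Finite ∧
      ∀ x ∈ closedBall (0 : Fin n → ℝ) R, dist (h x) x ≤ 1 / m := by
  have hm' : (0 : ℝ) < m := by exact_mod_cast hm
  set c : ℝ → ℝ := fun t => max (-(|R|+1)) (min (|R|+1) t) with hc_def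
  set g : ℝ → ℝ := fun t => (⌊(m : ℝ) * c t⌋ : ℝ) / m with hg_def
  have hc_mono : Monotone c := fun a b hab =>
    max_le_max le_rfl (min_le_min le_rfl hab)
  have hg_mono : Monotone g := by
    intro a b hab
    have h1 : ((⌊(m : ℝ) * c a⌋ : ℝ)) ≤ ((⌊(m : ℝ) * c b⌋ : ℝ)) := by
      exact_mod_cast Int.floor_le_floor (mul_le_mul_of_nonneg_left (hc_mono hab)
        (le_of_lt hm'))
    exact div_le_div_of_nonneg_right h1 hm'.le
  have hg_meas : Measurable g := hg_mono.measurable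
  have hg_fin : (Set.range g).Finite := by
    apply Set.Finite.subset (Set.Finite.image (fun z : ℤ => (z : ℝ) / m)
      (Set.finite_Icc ⌊(m : ℝ) * (-(|R|+1))⌋ ⌊(m : ℝ) * (|R|+1)⌋))
    rintro - ⟨t, rfl⟩
    refine ⟨⌊(m : ℝ) * c t⌋, ?_, rfl⟩
    rw [Set.mem_Icc]
    constructor
    · exact Int.floor_le_floor (mul_le_mul_of_nonneg_left (le_max_left _ _) hm'.le)
    · exact Int.floor_le_floor (mul_le_mul_of_nonneg_left
        (max_le (by linarith [abs_nonneg R]) (min_le_left _ _)) hm'.le)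
  refine ⟨fun x j => g (x j), ?_, ?_, ?_⟩
  · exact measurable_pi_lambda _ fun j => hg_meas.comp (measurable_pi_apply j)
  · apply Set.Finite.subset (Set.Finite.pi (fun _ : Fin n => hg_fin))
    rintro - ⟨x, rfl⟩
    exact fun j _ => ⟨x j, rfl⟩
  · intro x hx
    rw [mem_closedBall, dist_zero_right] at hx
    apply (dist_pi_le_iff (by positivity)).2
    intro j
    have hxj : |x j| ≤ |R| := by
      have h1 : dist (x j) ((0 : Fin n → ℝ) j) ≤ dist x 0 := dist_le_pi_dist x 0 j
      rw [Pi.zero_apply, Real.dist_eq, sub_zero] at h1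
      rw [← dist_zero_right] at hx
      exact le_trans h1 (hx.trans (le_abs_self R))
    have hcx : c (x j) = x j := by
      rw [hc_def]
      dsimp only
      rw [min_eq_right (by cases abs_le.1 hxj; linarith),
        max_eq_right (by cases abs_le.1 hxj; linarith)]
    show dist (g (x j)) (x j) ≤ 1 / m
    rw [hg_def]
    dsimp only
    rw [hcx, Real.dist_eq]
    have h1 : (⌊(m : ℝ) * x j⌋ : ℝ) ≤ (m : ℝ) * x j := Int.floor_le _
    have h2 : (m : ℝ) * x j < (⌊(m : ℝ) * x j⌋ : ℝ) + 1 := Int.lt_floor_add_one _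
    have e : (⌊(m : ℝ) * x j⌋ : ℝ) / m - x j = ((⌊(m : ℝ) * x j⌋ : ℝ) - m * x j) / m := by
      field_simp
    rw [e, abs_div, abs_of_pos hm', div_le_div_iff_of_pos_right hm', abs_le]
    constructor <;> linarith

section Key

lemma key_approx (n k : ℕ) (μ : Fin k → ProbabilityMeasure (Fin n → ℝ)) {ε : ℝ}
    (hε : 0 < ε) :
    ∃ N : ℕ, 0 < N ∧ Odd N ∧ ∃ p : Fin k → Fin N → (Fin n → ℝ),
      GPfam (fun q : Fin k × Fin N => p q.1 q.2) ∧
      ∀ i, levyProkhorovEDist (μ i : Measure (Fin n → ℝ))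
        ((N : ℝ≥0∞)⁻¹ • ∑ j, Measure.dirac (p i j)) ≤ 3 * ENNReal.ofReal ε := by
  classical
  -- Step 1 : a uniform tail bound
  have htail : ∃ R : ℕ, ∀ i, (μ i : Measure (Fin n → ℝ))
      (closedBall (0 : Fin n → ℝ) (R : ℝ))ᶜ ≤ ENNReal.ofReal ε := by
    have hper : ∀ i : Fin k, ∃ R : ℕ, (μ i : Measure (Fin n → ℝ))
        (closedBall (0 : Fin n → ℝ) (R : ℝ))ᶜ ≤ ENNReal.ofReal ε := by
      intro i
      by_cases h1ε : (1 : ℝ≥0∞) ≤ ENNReal.ofReal ε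
      · exact ⟨0, le_trans (le_trans (measure_mono (Set.subset_univ _))
          (le_of_eq measure_univ)) h1ε⟩
      push_neg at h1ε
      have hU : (⋃ r : ℕ, closedBall (0 : Fin n → ℝ) (r : ℝ)) = Set.univ := by
        ext x
        simp only [Set.mem_iUnion, Set.mem_univ, iff_true, mem_closedBall, dist_zero_right]
        exact ⟨⌈‖x‖⌉₊, Nat.le_ceil _⟩
      have hmono : Monotone (fun r : ℕ => closedBall (0 : Fin n → ℝ) (r : ℝ)) :=
        fun a b hab => closedBall_subset_closedBall (by exact_mod_cast hab)
      have htend := tendsto_measure_iUnion_atTop (μ := (μ i : Measure (Fin n → ℝ))) hmono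
      rw [hU, measure_univ] at htend
      have hlt : (1 : ℝ≥0∞) - ENNReal.ofReal ε < 1 :=
        ENNReal.sub_lt_self one_ne_top one_ne_zero
          (ENNReal.ofReal_pos.2 hε).ne'
      obtain ⟨R, hR⟩ := (htend.eventually (lt_mem_nhds hlt)).exists
      refine ⟨R, ?_⟩
      rw [measure_compl measurableSet_closedBall (measure_ne_top _ _), measure_univ]
      rw [tsub_le_iff_right]
      have := tsub_add_cancel_of_le h1ε.le
      calc (1 : ℝ≥0∞) = (1 - ENNReal.ofReal ε) + ENNReal.ofReal ε := this.symm
      _ ≤ (μ i : Measure (Fin n → ℝ)) (closedBall (0 : Fin n → ℝ) (R : ℝ))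
          + ENNReal.ofReal ε := add_le_add_left hR.le _
      _ = ENNReal.ofReal ε + (μ i : Measure (Fin n → ℝ))
          (closedBall (0 : Fin n → ℝ) (R : ℝ)) := by rw [add_comm]
    choose Rf hRf using hper
    refine ⟨Finset.univ.sup Rf, fun i => le_trans (measure_mono ?_) (hRf i)⟩
    apply Set.compl_subset_compl.2
    apply closedBall_subset_closedBall
    exact_mod_cast Finset.le_sup (Finset.mem_univ i)
  obtain ⟨R, hR⟩ := htail
  -- Step 2 : grid size
  set m : ℕ := ⌈ε⁻¹⌉₊ + 1 with hm_def
  have hm : 0 < m := Nat.succ_pos _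
  have hm' : (0 : ℝ) < m := by exact_mod_cast hm
  have hinvm : ε⁻¹ < (m : ℝ) := by
    have h1 := Nat.le_ceil ε⁻¹
    have h2 : ((⌈ε⁻¹⌉₊ : ℝ)) < m := by rw [hm_def]; push_cast; linarith
    linarith
  have h1m : 1 / (m : ℝ) ≤ ε := by
    rw [div_le_iff₀ hm']
    have h3 : ε * ε⁻¹ = 1 := mul_inv_cancel₀ hε.ne'
    nlinarith
  obtain ⟨h, hmeas, hfin, hdist⟩ := exists_grid n m hm (R : ℝ)
  set F : Finset (Fin n → ℝ) := hfin.toFinset with hF_def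
  have hF : ∀ x, h x ∈ F := fun x => hfin.mem_toFinset.2 ⟨x, rfl⟩
  set N : ℕ := 2 * (F.card * m) + 1 with hN_def
  have hN : 0 < N := Nat.succ_pos _
  have hNodd : Odd N := ⟨F.card * m, by omega⟩
  have hN' : (0 : ℝ) < N := by exact_mod_cast hN
  have hJN : (F.card : ℝ) / N ≤ ε := by
    have h4 : (F.card : ℝ) / N ≤ 1 / m := by
      rw [div_le_div_iff₀ hN' hm']
      have h5 : (F.card : ℝ) * m ≤ N := by
        rw [hN_def]
        push_cast
        nlinarith [Nat.cast_nonneg (α := ℝ) (F.card * m)]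
      linarith
    linarith
  -- Step 3 : rounding, for every i
  have hround := fun i : Fin k =>
    exists_rounding (μ i : Measure (Fin n → ℝ)) hmeas F hF N hN
  choose q hqmem hqb using hround
  -- Step 4 : perturbation into general position
  set ec : Fin k × Fin N ≃ Fin (k * N) := finProdFinEquiv
  obtain ⟨a, had, hagp⟩ := exists_gp_perturb (n := n) (k * N)
    (fun l => (fun pr : Fin k × Fin N => q pr.1 pr.2) (ec.symm l)) ε hε
  set p : Fin k → Fin N → (Fin n → ℝ) := fun i l => a (ec (i, l)) with hp_def
  have hdistp : ∀ i l, dist (p i l) (q i l) ≤ ε := by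
    intro i l
    have h7 := had (ec (i, l))
    rw [Equiv.symm_apply_apply] at h7
    exact h7.le
  refine ⟨N, hN, hNodd, p, ?_, ?_⟩
  · have := hagp.comp ec.toEmbedding
    exact this
  · intro i
    set Q : Measure (Fin n → ℝ) := Measure.map h (μ i : Measure (Fin n → ℝ)) with hQ_def
    set Em : Measure (Fin n → ℝ) := (N : ℝ≥0∞)⁻¹ • ∑ l, Measure.dirac (q i l) with hE_def
    set ν : Measure (Fin n → ℝ) := (N : ℝ≥0∞)⁻¹ • ∑ l, Measure.dirac (p i l) with hν_def
    have d1 : levyProkhorovEDist (μ i : Measure (Fin n → ℝ)) Q ≤ ENNReal.ofReal ε := by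
      apply lp_of_map _ hmeas (G := closedBall (0 : Fin n → ℝ) (R : ℝ)) hε.le
      · exact fun x hx => le_trans (hdist x hx) h1m
      · exact hR i
    have d2 : levyProkhorovEDist Q Em ≤ ENNReal.ofReal ε := by
      refine le_trans (lp_of_tv Q Em (ENNReal.ofReal ((F.card : ℝ) / N))
        (fun B hB => (hqb i B hB))) ?_
      exact ENNReal.ofReal_le_ofReal hJN
    have d3 : levyProkhorovEDist Em ν ≤ ENNReal.ofReal ε := by
      apply lp_of_perturb _ _ _ hε.le
      intro l
      rw [dist_comm]
      exact hdistp i l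
    calc levyProkhorovEDist (μ i : Measure (Fin n → ℝ)) ν
        ≤ levyProkhorovEDist (μ i : Measure (Fin n → ℝ)) Q + levyProkhorovEDist Q ν :=
          levyProkhorovEDist_triangle _ _ _
      _ ≤ levyProkhorovEDist (μ i : Measure (Fin n → ℝ)) Q
          + (levyProkhorovEDist Q Em + levyProkhorovEDist Em ν) :=
          add_le_add_right (levyProkhorovEDist_triangle _ _ _) _
      _ ≤ ENNReal.ofReal ε + (ENNReal.ofReal ε + ENNReal.ofReal ε) :=
          add_le_add d1 (add_le_add d2 d3)
      _ = 3 * ENNReal.ofReal ε := by ring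

end Key

theorem dense_tuples_oddlySupported (n k : ℕ) (hk : 0 < k) :
    Dense {μ : Fin k → ProbabilityMeasure (Fin n → ℝ) |
      ∃ N : ℕ, Odd N ∧ ∃ p : Fin k → Fin N → (Fin n → ℝ),
        InGeneralPosition (fun q : Fin k × Fin N => p q.1 q.2) ∧
        ∀ i, (μ i : Measure (Fin n → ℝ)) =
          (N : ENNReal)⁻¹ • ∑ j, Measure.dirac (p i j)} := by
  intro μ
  have hεpos : ∀ m : ℕ, (0 : ℝ) < 1 / ((m : ℝ) + 1) := fun m => by positivity
  choose N hNpos hNodd p hgp hLP using fun m : ℕ => key_approx n k μ (hεpos m)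
  have hprob : ∀ (m : ℕ) (i : Fin k),
      IsProbabilityMeasure ((N m : ℝ≥0∞)⁻¹ • ∑ j, Measure.dirac (p m i j)) := by
    intro m i
    constructor
    rw [Measure.smul_apply, Measure.finset_sum_apply, smul_eq_mul]
    have : ∀ j : Fin (N m), Measure.dirac (p m i j) (Set.univ) = 1 := fun j => by
      simp
    rw [Finset.sum_congr rfl fun j _ => this j]
    rw [Finset.sum_const, Finset.card_univ, Fintype.card_fin, nsmul_eq_mul, mul_one]
    exact ENNReal.inv_mul_cancel (by exact_mod_cast (hNpos m).ne')
      (ENNReal.natCast_ne_top _)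
  set seq : ℕ → (Fin k → ProbabilityMeasure (Fin n → ℝ)) := fun m i =>
    ⟨(N m : ℝ≥0∞)⁻¹ • ∑ j, Measure.dirac (p m i j), hprob m i⟩ with hseq_def
  have hmem : ∀ m, seq m ∈ {μ : Fin k → ProbabilityMeasure (Fin n → ℝ) |
      ∃ N : ℕ, Odd N ∧ ∃ p : Fin k → Fin N → (Fin n → ℝ),
        InGeneralPosition (fun q : Fin k × Fin N => p q.1 q.2) ∧
        ∀ i, (μ i : Measure (Fin n → ℝ)) =
          (N : ENNReal)⁻¹ • ∑ j, Measure.dirac (p i j)} := by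
    intro m
    exact ⟨N m, hNodd m, p m, (hgp m).inGeneralPosition, fun i => rfl⟩
  have htendsto : Filter.Tendsto seq Filter.atTop (nhds μ) := by
    rw [tendsto_pi_nhds]
    intro i
    set φ := LevyProkhorov.probabilityMeasureHomeomorph (Ω := (Fin n → ℝ))
    suffices hT : Filter.Tendsto (fun m => φ (seq m i)) Filter.atTop (nhds (φ (μ i))) by
      have h2 := ((φ.symm.continuous.tendsto _).comp hT)
      simpa [Function.comp_def] using h2
    rw [tendsto_iff_dist_tendsto_zero]
    have hb : ∀ m : ℕ, dist (φ (seq m i)) (φ (μ i)) ≤ 3 * (1 / ((m : ℝ) + 1)) := by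
      intro m
      show levyProkhorovDist _ _ ≤ _
      have h3 : levyProkhorovEDist ((seq m i) : Measure (Fin n → ℝ))
          ((μ i) : Measure (Fin n → ℝ)) ≤ 3 * ENNReal.ofReal (1 / ((m : ℝ) + 1)) := by
        rw [levyProkhorovEDist_comm]
        exact hLP m i
      have h4 := ENNReal.toReal_mono (by finiteness) h3
      refine le_trans (le_of_eq rfl) (le_trans h4 (le_of_eq ?_))
      rw [ENNReal.toReal_mul, ENNReal.toReal_ofReal (hεpos m).le]
      norm_num
    apply squeeze_zero (fun m => dist_nonneg) hb
    have h5 : Filter.Tendsto (fun m : ℕ => 1 / ((m : ℝ) + 1)) Filter.atTop (nhds 0) :=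
      tendsto_one_div_add_atTop_nhds_zero_nat
    have h6 := h5.const_mul (3 : ℝ)
    simpa using h6
  exact mem_closure_of_tendsto htendsto (Filter.Eventually.of_forall hmem)
end
end

section
/- Let n and D be positive integers with n a power of two. Then the number N(n, D) = (nD)! / (D! · (n!)^D) of unordered partitions of a set of nD elements into D blocks of n elements each is odd. -/
open Finset

section aux

variable {α : Type*} [DecidableEq α]

/-- Insert a new block into a partition of `s \ t` to get a partition of `s`. -/
def insertPart {s t : Finset α} (hts : t ⊆ s) (htne : t ≠ ∅) (P : Finpartition (s \ t)) :
    Finpartition s where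
  parts := insert t P.parts
  supIndep := by
    rw [Finset.supIndep_iff_pairwiseDisjoint, coe_insert]
    refine P.supIndep.pairwiseDisjoint.insert ?_
    intro b hb _
    have hb' : b ⊆ s \ t := P.le hb
    exact Finset.disjoint_sdiff.mono_right hb'
  sup_parts := by
    rw [Finset.sup_insert, P.sup_parts, id_eq, Finset.sup_eq_union,
      Finset.union_sdiff_of_subset hts]
  bot_notMem := by
    simp only [Finset.bot_eq_empty, mem_insert, not_or]
    exact ⟨fun h => htne h.symm, P.bot_notMem⟩

@[simp] lemma insertPart_parts {s t : Finset α} (hts : t ⊆ s) (htne : t ≠ ∅)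
    (P : Finpartition (s \ t)) : (insertPart hts htne P).parts = insert t P.parts := rfl

lemma sup_erase_eq {s : Finset α} (P : Finpartition s) {t : Finset α} (ht : t ∈ P.parts) :
    (P.parts.erase t).sup id = s \ t := by
  ext a
  rw [Finset.mem_sup, Finset.mem_sdiff]
  constructor
  · rintro ⟨b, hb, hab⟩
    obtain ⟨hbt, hbP⟩ := Finset.mem_erase.mp hb
    refine ⟨P.le hbP hab, fun hat => hbt ?_⟩
    exact P.eq_of_mem_parts hbP ht hab hat
  · rintro ⟨has, hat⟩
    refine ⟨P.part a, Finset.mem_erase.mpr ⟨?_, P.part_mem.2 has⟩, P.mem_part has⟩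
    rintro rfl
    exact hat (P.mem_part has)

/-- Remove a block from a partition of `s` to get a partition of `s \ t`. -/
def erasePart {s : Finset α} (P : Finpartition s) {t : Finset α} (ht : t ∈ P.parts) :
    Finpartition (s \ t) :=
  P.ofSubset (Finset.erase_subset t P.parts) (sup_erase_eq P ht)

@[simp] lemma erasePart_parts {s : Finset α} (P : Finpartition s) {t : Finset α}
    (ht : t ∈ P.parts) : (erasePart P ht).parts = P.parts.erase t := rfl

/-- The partitions of `s` with all parts of size `n` whose block at `x` is `t` are in
bijection with the partitions of `s \ t` with all parts of size `n`. -/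
def fiberEquiv {n : ℕ} {s : Finset α} {x : α} (hx : x ∈ s) {t : Finset α} (hts : t ⊆ s)
    (hxt : x ∈ t) (htc : t.card = n) (hn : 0 < n) :
    {P : Finpartition s // (∀ b ∈ P.parts, b.card = n) ∧ P.part x = t} ≃
      {P' : Finpartition (s \ t) // ∀ b ∈ P'.parts, b.card = n} where
  toFun := fun ⟨P, hpred, hpart⟩ =>
    ⟨erasePart P (hpart ▸ P.part_mem.2 hx), fun b hb =>
      hpred b (Finset.mem_of_mem_erase hb)⟩
  invFun := fun ⟨P', h'⟩ =>
    have htne : t ≠ ∅ := by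
      intro h; rw [h, Finset.card_empty] at htc; omega
    ⟨insertPart hts htne P', by
      constructor
      · intro b hb
        rcases Finset.mem_insert.mp hb with rfl | hb
        · exact htc
        · exact h' b hb
      · exact Finpartition.part_eq_of_mem _ (Finset.mem_insert_self t _) hxt⟩
  left_inv := by
    rintro ⟨P, hpred, hpart⟩
    apply Subtype.ext
    apply Finpartition.ext
    simp only [insertPart_parts, erasePart_parts]
    exact Finset.insert_erase (hpart ▸ P.part_mem.2 hx)
  right_inv := by
    rintro ⟨P', h'⟩
    apply Subtype.ext
    apply Finpartition.ext
    simp only [insertPart_parts, erasePart_parts]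
    apply Finset.erase_insert
    intro htP
    have : t ⊆ s \ t := P'.le htP
    exact (Finset.mem_sdiff.mp (this hxt)).2 hxt

lemma card_subsets_containing {s : Finset α} {x : α} (hx : x ∈ s) {n : ℕ} (hn : 0 < n) :
    ((s.powersetCard n).filter (fun t => x ∈ t)).card = (s.card - 1).choose (n - 1) := by
  rw [← Finset.card_erase_of_mem hx, ← Finset.card_powersetCard]
  apply Finset.card_bij (fun t _ => t.erase x)
  · intro t ht
    simp only [Finset.mem_filter, Finset.mem_powersetCard] at ht
    rw [Finset.mem_powersetCard]
    exact ⟨Finset.erase_subset_erase x ht.1.1, by rw [Finset.card_erase_of_mem ht.2, ht.1.2]⟩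
  · intro t ht t' ht' h
    simp only [Finset.mem_filter, Finset.mem_powersetCard] at ht ht'
    rw [← Finset.insert_erase ht.2, ← Finset.insert_erase ht'.2, h]
  · intro u hu
    rw [Finset.mem_powersetCard] at hu
    have hxu : x ∉ u := fun h => (Finset.mem_erase.mp (hu.1 h)).1 rfl
    refine ⟨insert x u, ?_, Finset.erase_insert hxu⟩
    simp only [Finset.mem_filter, Finset.mem_powersetCard]
    refine ⟨⟨Finset.insert_subset hx (hu.1.trans (Finset.erase_subset _ _)), ?_⟩,
      Finset.mem_insert_self _ _⟩
    rw [Finset.card_insert_of_notMem hxu, hu.2]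
    omega

/-- The number of partitions of an `n * D`-element set into blocks of size `n`. -/
lemma card_partitions {α : Type*} [DecidableEq α] (n : ℕ) (hn : 0 < n) :
    ∀ (D : ℕ) (s : Finset α), s.card = n * D →
      Nat.card {P : Finpartition s // ∀ b ∈ P.parts, b.card = n} = Nat.uniformBell D n := by
  intro D
  induction D with
  | zero =>
    intro s hs
    rw [mul_zero, Finset.card_eq_zero] at hs
    subst hs
    rw [Nat.uniformBell_zero_left, Nat.card_eq_one_iff_unique]
    constructor
    · constructor
      rintro ⟨P, hP⟩ ⟨Q, hQ⟩
      apply Subtype.ext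
      apply Finpartition.ext
      have hparts : ∀ R : Finpartition (∅ : Finset α), R.parts = ∅ := by
        intro R
        rw [Finset.eq_empty_iff_forall_notMem]
        intro b hb
        have h1 : b ⊆ ∅ := R.le hb
        have h2 := R.nonempty_of_mem_parts hb
        rw [Finset.subset_empty] at h1
        simp [h1] at h2
      rw [hparts P, hparts Q]
    · exact ⟨⟨(Finpartition.empty (Finset α)).copy Finset.bot_eq_empty, by simp⟩⟩
  | succ D ih =>
    intro s hs
    have hs0 : s.Nonempty := Finset.card_pos.mp (by rw [hs]; positivity)
    obtain ⟨x, hx⟩ := hs0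
    classical
    have key : ∀ t ∈ (s.powersetCard n).filter (fun t => x ∈ t),
        Nat.card {P : Finpartition s // (∀ b ∈ P.parts, b.card = n) ∧ P.part x = t} =
          Nat.uniformBell D n := by
      intro t ht
      simp only [Finset.mem_filter, Finset.mem_powersetCard] at ht
      rw [Nat.card_congr (fiberEquiv hx ht.1.1 ht.2 ht.1.2 hn)]
      apply ih
      rw [Finset.card_sdiff_of_subset ht.1.1, hs, ht.1.2]
      ring_nf
      omega
    -- split the count by the block containing x
    rw [Nat.card_eq_fintype_card, Fintype.card_subtype]
    have hfib : ∀ P ∈ Finset.univ.filter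
        (fun P : Finpartition s => ∀ b ∈ P.parts, b.card = n),
        P.part x ∈ (s.powersetCard n).filter (fun t => x ∈ t) := by
      intro P hP
      simp only [Finset.mem_filter, Finset.mem_univ, true_and] at hP
      simp only [Finset.mem_filter, Finset.mem_powersetCard]
      exact ⟨⟨P.le (P.part_mem.2 hx), hP _ (P.part_mem.2 hx)⟩, P.mem_part hx⟩
    rw [Finset.card_eq_sum_card_fiberwise hfib]
    have hsummand : ∀ t ∈ (s.powersetCard n).filter (fun t => x ∈ t),
        ((Finset.univ.filter (fun P : Finpartition s => ∀ b ∈ P.parts, b.card = n)).filter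
          (fun P => P.part x = t)).card = Nat.uniformBell D n := by
      intro t ht
      rw [Finset.filter_filter]
      rw [← key t ht, Nat.card_eq_fintype_card, Fintype.card_subtype]
    rw [Finset.sum_congr rfl hsummand, Finset.sum_const, smul_eq_mul,
      card_subsets_containing hx hn, Nat.uniformBell_succ_left, hs]
    have he : n * (D + 1) - 1 = D * n + n - 1 := by
      have : n * (D + 1) = D * n + n := by ring
      omega
    rw [he]

end aux

lemma padicValNat_two_pow_mul_factorial (m : ℕ) :
    ∀ D' : ℕ, padicValNat 2 ((2 ^ m * D').factorial) =
      padicValNat 2 D'.factorial + (2 ^ m - 1) * D' := by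
  haveI : Fact (Nat.Prime 2) := ⟨Nat.prime_two⟩
  induction m with
  | zero => intro D'; simp
  | succ k ihk =>
    intro D'
    have h2 : 2 ^ (k + 1) * D' = 2 * (2 ^ k * D') := by ring
    rw [h2, padicValNat_factorial_mul, ihk D']
    obtain ⟨b, hb⟩ : ∃ b, 2 ^ k = b + 1 :=
      ⟨2 ^ k - 1, by have := Nat.one_le_two_pow (n := k); omega⟩
    have e1 : 2 ^ (k + 1) - 1 = 2 * b + 1 := by
      have : 2 ^ (k + 1) = 2 * (b + 1) := by rw [pow_succ, hb]; ring
      omega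
    rw [hb, e1, Nat.add_sub_cancel]
    ring

theorem odd_number_of_partitions (n D : ℕ) (hn : 0 < n) (hD : 0 < D)
    (hpow : ∃ m : ℕ, n = 2 ^ m) :
    Nat.card {P : Finpartition (Finset.univ : Finset (Fin (n * D))) //
        ∀ b ∈ P.parts, b.card = n} =
      (n * D).factorial / (D.factorial * n.factorial ^ D) ∧
    Odd ((n * D).factorial / (D.factorial * n.factorial ^ D)) := by
  obtain ⟨m, rfl⟩ := hpow
  set n := 2 ^ m with hn_def
  have hcount := card_partitions n hn D (Finset.univ : Finset (Fin (n * D)))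
    (by simp)
  have hdiv : (n * D).factorial / (D.factorial * n.factorial ^ D) = Nat.uniformBell D n := by
    rw [Nat.uniformBell_eq_div D hn.ne', mul_comm D n, mul_comm (n.factorial ^ D) D.factorial]
  haveI : Fact (Nat.Prime 2) := ⟨Nat.prime_two⟩
  have hval := padicValNat_two_pow_mul_factorial m
  have hB : Nat.uniformBell D n * n.factorial ^ D * D.factorial = (D * n).factorial :=
    Nat.uniformBell_mul_eq D hn.ne'
  have hBne : Nat.uniformBell D n ≠ 0 := by
    intro h
    rw [h, zero_mul, zero_mul] at hB
    exact (Nat.factorial_ne_zero _) hB.symm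
  have hvn : padicValNat 2 n.factorial = 2 ^ m - 1 := by
    have := hval 1
    simpa using this
  have hvB : padicValNat 2 (Nat.uniformBell D n) = 0 := by
    have hv := congrArg (padicValNat 2) hB
    rw [padicValNat.mul (by positivity) (Nat.factorial_ne_zero _),
      padicValNat.mul hBne (by positivity),
      padicValNat.pow _ _, hvn, mul_comm D n, hval D,
      mul_comm D (2 ^ m - 1)] at hv
    omega
  have hodd : Odd (Nat.uniformBell D n) := by
    rw [Nat.odd_iff]
    have hnd : ¬ 2 ∣ Nat.uniformBell D n := by
      rcases (padicValNat.eq_zero_iff.mp hvB) with h | h | h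
      · omega
      · exact absurd h hBne
      · exact h
    omega
  exact ⟨hcount.trans hdiv.symm, hdiv ▸ hodd⟩
end

section
/- Let n, D be positive integers and let v_1, …, v_{nD+1} be points in ℝ^n such that no n+1 of them lie on a common affine hyperplane. Then no arrangement of D hyperplanes in ℝ^n bisects all of the Dirac point masses δ_{v_1}, …, δ_{v_{nD+1}} simultaneously; that is, at least D+1 hyperplanes are needed to bisect this family of measures. -/
open MeasureTheory

noncomputable section

/-- An arrangement of `D` hyperplanes in `ℝ^n`: a `D`-tuple of affine functions,
each with nonzero linear part. -/
def IsArrangement {n D : ℕ} (A : Fin D → ((Fin n → ℝ) →ᵃ[ℝ] ℝ)) : Prop :=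
  ∀ i, (A i).linear ≠ 0

/-- The arrangement given by the affine functions `A i` bisects a measure `μ` if both
the set where the product polynomial is positive and the set where it is negative
have measure at most half of the total measure. -/
def Bisects {n D : ℕ} (A : Fin D → ((Fin n → ℝ) →ᵃ[ℝ] ℝ))
    (μ : Measure (Fin n → ℝ)) : Prop :=
  μ {x | 0 < ∏ i, A i x} ≤ μ Set.univ / 2 ∧
    μ {x | ∏ i, A i x < 0} ≤ μ Set.univ / 2

theorem no_bisection_of_deltas_in_general_position (n D : ℕ) (hn : 0 < n) (hD : 0 < D)
    (v : Fin (n * D + 1) → (Fin n → ℝ)) (hgp : InGeneralPosition v) :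
    ¬ ∃ A : Fin D → ((Fin n → ℝ) →ᵃ[ℝ] ℝ),
        IsArrangement A ∧ ∀ k, Bisects A (Measure.dirac (v k)) := by
  rintro ⟨A, hA, hbis⟩
  have key : ∀ k, ∃ i, A i (v k) = 0 := by
    intro k
    by_contra h
    push_neg at h
    have hne : ∏ i, A i (v k) ≠ 0 := Finset.prod_ne_zero_iff.2 fun i _ => h i
    have htot : (Measure.dirac (v k)) Set.univ = 1 :=
      Measure.dirac_apply_of_mem (Set.mem_univ _)
    rcases hne.lt_or_gt with hlt | hgt
    · have := (hbis k).2
      rw [Measure.dirac_apply_of_mem (s := {x | ∏ i, A i x < 0}) hlt, htot] at this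
      exact absurd this (not_le.2 (ENNReal.half_lt_self one_ne_zero ENNReal.one_ne_top))
    · have := (hbis k).1
      rw [Measure.dirac_apply_of_mem (s := {x | 0 < ∏ i, A i x}) hgt, htot] at this
      exact absurd this (not_le.2 (ENNReal.half_lt_self one_ne_zero ENNReal.one_ne_top))
  choose f hf using key
  have hcard : Fintype.card (Fin D) * n < Fintype.card (Fin (n * D + 1)) := by
    simp [Nat.mul_comm]
  obtain ⟨i, hi⟩ := Fintype.exists_lt_card_fiber_of_mul_lt_card f hcard
  have hsub : (↑(Finset.univ.filter fun k => f k = i) : Set (Fin (n * D + 1)))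
      ⊆ {k | A i (v k) = 0} := by
    intro k hk
    simp only [Finset.coe_filter, Set.mem_setOf_eq, Finset.mem_univ, true_and] at hk
    simpa [← hk] using hf k
  have h1 : (n : ℕ∞) < ((Finset.univ.filter fun k => f k = i).card : ℕ∞) := by
    exact_mod_cast hi
  have h2 : ((Finset.univ.filter fun k => f k = i).card : ℕ∞) ≤ {k | A i (v k) = 0}.encard := by
    rw [← Set.encard_coe_eq_coe_finsetCard]
    exact Set.encard_mono hsub
  exact lt_irrefl _ (h1.trans_le (h2.trans (hgp (A i) (hA i))))
end
end

section
/- Let m ≥ 0 and n ≥ 1 be integers with 2^m ≤ n, and let D ≥ 2 be an integer. Then there exist nonnegative integers k_1, …, k_D with k_i ≤ n for every i, k_1 + ⋯ + k_D = 2^{m+1} − 1, and such that the multinomial coefficient (2^{m+1} − 1)! / (k_1! · k_2! ⋯ k_D!) is odd. -/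
lemma odd_choose_two_pow_sub_one : ∀ (s k : ℕ), k ≤ 2 ^ s - 1 →
    Odd (Nat.choose (2 ^ s - 1) k) := by
  intro s
  induction s with
  | zero => intro k hk; interval_cases k; simp
  | succ s ih =>
    intro k hk
    have h2 : Fact (Nat.Prime 2) := ⟨Nat.prime_two⟩
    have hmod := @Choose.choose_modEq_choose_mod_mul_choose_div_nat (2 ^ (s + 1) - 1) k 2 h2
    have hn2 : (2 ^ (s + 1) - 1) % 2 = 1 := by
      have : 2 ^ (s + 1) - 1 = 2 * (2 ^ s - 1) + 1 := by
        have : 1 ≤ 2 ^ s := Nat.one_le_two_pow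
        omega
      omega
    have hnd : (2 ^ (s + 1) - 1) / 2 = 2 ^ s - 1 := by
      have : 1 ≤ 2 ^ s := Nat.one_le_two_pow
      omega
    have hone : Nat.choose ((2 ^ (s + 1) - 1) % 2) (k % 2) = 1 := by
      rw [hn2]
      have : k % 2 = 0 ∨ k % 2 = 1 := by omega
      rcases this with h | h <;> simp [h]
    have hkd : k / 2 ≤ 2 ^ s - 1 := by
      have h1 : 1 ≤ 2 ^ s := Nat.one_le_two_pow
      omega
    have := ih (k / 2) hkd
    rw [Nat.odd_iff] at this ⊢
    have : Nat.choose ((2 ^ (s + 1) - 1) % 2) (k % 2) *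
        Nat.choose ((2 ^ (s + 1) - 1) / 2) (k / 2) % 2 = 1 := by
      rw [hone, hnd, one_mul]; exact this
    rw [Nat.ModEq] at hmod
    omega

theorem exists_odd_multinomial (m n D : ℕ) (hm : 0 ≤ m) (hn : 1 ≤ n)
    (hmn : 2 ^ m ≤ n) (hD : 2 ≤ D) :
    ∃ k : Fin D → ℕ, (∀ i, k i ≤ n) ∧ (∑ i, k i) = 2 ^ (m + 1) - 1 ∧
      Odd (Nat.multinomial Finset.univ k) := by
  have h1 : 1 ≤ 2 ^ m := Nat.one_le_two_pow
  set a : Fin D := ⟨0, by omega⟩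
  set b : Fin D := ⟨1, by omega⟩
  have hab : a ≠ b := by simp [a, b, Fin.ext_iff]
  set k : Fin D → ℕ := fun i => if i = a then 2 ^ m else if i = b then 2 ^ m - 1 else 0
    with hk
  have hka : k a = 2 ^ m := by simp [hk]
  have hkb : k b = 2 ^ m - 1 := by simp [hk, hab.symm]
  have hsum : ∑ i, k i = 2 ^ (m + 1) - 1 := by
    rw [← Finset.sum_subset (Finset.subset_univ ({a, b} : Finset (Fin D)))
      (fun i _ hi => by
        simp only [Finset.mem_insert, Finset.mem_singleton, not_or] at hi
        simp [hk, hi.1, hi.2])]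
    rw [Finset.sum_pair hab, hka, hkb]
    rw [pow_succ]
    omega
  refine ⟨k, fun i => ?_, hsum, ?_⟩
  · by_cases hia : i = a
    · rw [hia, hka]; exact hmn
    · by_cases hib : i = b
      · rw [hib, hkb]; omega
      · simp [hk, hia, hib]
  · have hmul : Nat.multinomial Finset.univ k = Nat.multinomial ({a, b} : Finset (Fin D)) k := by
      unfold Nat.multinomial
      rw [← Finset.sum_subset (Finset.subset_univ ({a, b} : Finset (Fin D)))
        (fun i _ hi => by
          simp only [Finset.mem_insert, Finset.mem_singleton, not_or] at hi
          simp [hk, hi.1, hi.2]),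
        ← Finset.prod_subset (Finset.subset_univ ({a, b} : Finset (Fin D)))
        (fun i _ hi => by
          simp only [Finset.mem_insert, Finset.mem_singleton, not_or] at hi
          simp [hk, hi.1, hi.2])]
    rw [hmul, Nat.binomial_eq_choose hab, hka, hkb]
    have heq : 2 ^ m + (2 ^ m - 1) = 2 ^ (m + 1) - 1 := by rw [pow_succ]; omega
    rw [heq]
    exact odd_choose_two_pow_sub_one (m + 1) (2 ^ m) (by rw [pow_succ]; omega)
end
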